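/- Let (Ω, P) be a probability space, x, y : ℕ → Ω → ℝ sequences of measurable functions with each product x_j y_k integrable, and ρ : ℕ → ℝ with ρ_j > 0. Assume A := ∫_Ω ∑_j ρ_j⁻¹ x_j² dP < ∞ and B := ∫_Ω ∑_k y_k² dP < ∞. For j, j' ∈ ℕ define h_{jj'} = ∑_k E[x_j y_k] E[x_{j'} y_k] (the series converges absolutely). Then ∑_{j,j'} ρ_j⁻¹ ρ_{j'}⁻¹ h_{jj'}² ≤ A² B². -/

import Mathlib

open MeasureTheory ENNReal

set_option maxHeartbeats 1000000 in
/-- The bound for term I in the proof of Theorem 1: with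
`A = E‖X‖²_{H(K)} = ∫ ∑_j ρ_j⁻¹ x_j² dP < ∞` and `B = E‖Y‖²_{L₂} = ∫ ∑_k y_k² dP < ∞`,
the coefficients `h_{jj'} = ∑_k E[x_j y_k] E[x_{j'} y_k]` (the series converging
absolutely) satisfy `∑_{j,j'} ρ_j⁻¹ ρ_{j'}⁻¹ h_{jj'}² ≤ A² B²`. -/
theorem term_I_bound
    {Ω : Type*} [MeasurableSpace Ω] (P : Measure Ω) [IsProbabilityMeasure P]
    (x y : ℕ → Ω → ℝ)
    (hxm : ∀ j, Measurable (x j)) (hym : ∀ k, Measurable (y k))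
    (hxyi : ∀ j k, Integrable (fun ω => x j ω * y k ω) P)
    (ρ : ℕ → ℝ) (hρ : ∀ j, 0 < ρ j)
    (A B : ℝ≥0∞)
    (hA : A = ∫⁻ ω, ∑' (j : ℕ), ENNReal.ofReal ((ρ j)⁻¹ * (x j ω) ^ 2) ∂P)
    (hAfin : A ≠ ⊤)
    (hB : B = ∫⁻ ω, ∑' (k : ℕ), ENNReal.ofReal ((y k ω) ^ 2) ∂P)
    (hBfin : B ≠ ⊤) :
    (∀ j j' : ℕ, Summable (fun k : ℕ =>
        |(∫ ω, x j ω * y k ω ∂P) * (∫ ω, x j' ω * y k ω ∂P)|))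
      ∧ ∑' (j : ℕ) (j' : ℕ),
          ENNReal.ofReal ((ρ j)⁻¹ * (ρ j')⁻¹ *
            (∑' k : ℕ, (∫ ω, x j ω * y k ω ∂P) * (∫ ω, x j' ω * y k ω ∂P)) ^ 2)
        ≤ A ^ 2 * B ^ 2 := by
  set a : ℕ → ℝ := fun j => ∫ ω, x j ω ^ 2 ∂P with ha
  set b : ℕ → ℝ := fun k => ∫ ω, y k ω ^ 2 ∂P with hb
  have hx2m : ∀ j, Measurable fun ω => x j ω ^ 2 := fun j => (hxm j).pow_const 2
  have hy2m : ∀ k, Measurable fun ω => y k ω ^ 2 := fun k => (hym k).pow_const 2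
  have hρinv : ∀ j, ENNReal.ofReal (ρ j)⁻¹ ≠ 0 := fun j => by
    simp [ENNReal.ofReal_eq_zero, not_le, inv_pos, hρ j]
  have hA' : A = ∑' j, ENNReal.ofReal (ρ j)⁻¹ * ∫⁻ ω, ENNReal.ofReal (x j ω ^ 2) ∂P := by
    rw [hA, lintegral_tsum (f := fun j ω => ENNReal.ofReal ((ρ j)⁻¹ * x j ω ^ 2)) fun j =>
      ((measurable_const.mul (hx2m j)).ennreal_ofReal).aemeasurable]
    congr 1; funext j
    simp_rw [ENNReal.ofReal_mul (inv_nonneg.2 (hρ j).le)]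
    rw [lintegral_const_mul _ (hx2m j).ennreal_ofReal]
  have hB' : B = ∑' k, ∫⁻ ω, ENNReal.ofReal (y k ω ^ 2) ∂P := by
    rw [hB, lintegral_tsum fun k => ((hy2m k).ennreal_ofReal).aemeasurable]
  have hlxfin : ∀ j, (∫⁻ ω, ENNReal.ofReal (x j ω ^ 2) ∂P) ≠ ⊤ := by
    intro j
    have hle : ENNReal.ofReal (ρ j)⁻¹ * ∫⁻ ω, ENNReal.ofReal (x j ω ^ 2) ∂P ≤ A := by
      rw [hA']; exact ENNReal.le_tsum j
    intro htop
    rw [htop, ENNReal.mul_top (hρinv j)] at hle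
    exact hAfin (top_le_iff.mp hle)
  have hlyfin : ∀ k, (∫⁻ ω, ENNReal.ofReal (y k ω ^ 2) ∂P) ≠ ⊤ := by
    intro k
    have hle : (∫⁻ ω, ENNReal.ofReal (y k ω ^ 2) ∂P) ≤ B := by
      rw [hB']; exact ENNReal.le_tsum k
    exact fun htop => hBfin (top_le_iff.mp (htop ▸ hle))
  have hx2i : ∀ j, Integrable (fun ω => x j ω ^ 2) P := by
    intro j
    refine ⟨(hx2m j).aestronglyMeasurable, ?_⟩
    rw [hasFiniteIntegral_iff_ofReal (ae_of_all _ fun ω => sq_nonneg _)]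
    exact (hlxfin j).lt_top
  have hy2i : ∀ k, Integrable (fun ω => y k ω ^ 2) P := by
    intro k
    refine ⟨(hy2m k).aestronglyMeasurable, ?_⟩
    rw [hasFiniteIntegral_iff_ofReal (ae_of_all _ fun ω => sq_nonneg _)]
    exact (hlyfin k).lt_top
  have hanon : ∀ j, 0 ≤ a j := fun j => integral_nonneg fun ω => sq_nonneg _
  have hbnon : ∀ k, 0 ≤ b k := fun k => integral_nonneg fun ω => sq_nonneg _
  have hax : ∀ j, ENNReal.ofReal (a j) = ∫⁻ ω, ENNReal.ofReal (x j ω ^ 2) ∂P := fun j =>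
    ofReal_integral_eq_lintegral_ofReal (hx2i j) (ae_of_all _ fun ω => sq_nonneg _)
  have hby : ∀ k, ENNReal.ofReal (b k) = ∫⁻ ω, ENNReal.ofReal (y k ω ^ 2) ∂P := fun k =>
    ofReal_integral_eq_lintegral_ofReal (hy2i k) (ae_of_all _ fun ω => sq_nonneg _)
  have hasum : ∑' j, ENNReal.ofReal ((ρ j)⁻¹ * a j) = A := by
    rw [hA']; congr 1; funext j
    rw [ENNReal.ofReal_mul (inv_nonneg.2 (hρ j).le), hax j]
  have hbsum : ∑' k, ENNReal.ofReal (b k) = B := by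
    rw [hB']; congr 1; funext k; exact hby k
  have hbsummable : Summable b := by
    have h := ENNReal.summable_toReal (f := fun k => ENNReal.ofReal (b k))
      (by rw [hbsum]; exact hBfin)
    simpa [ENNReal.toReal_ofReal, hbnon] using h
  set Br : ℝ := ∑' k, b k with hBr
  have hBrnon : 0 ≤ Br := tsum_nonneg hbnon
  have hBrB : ENNReal.ofReal Br = B := by
    rw [hBr, ENNReal.ofReal_tsum_of_nonneg hbnon hbsummable, hbsum]
  have hmemx : ∀ j, MemLp (x j) 2 P := fun j =>
    (memLp_two_iff_integrable_sq (hxm j).aestronglyMeasurable).2 (hx2i j)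
  have hmemy : ∀ k, MemLp (y k) 2 P := fun k =>
    (memLp_two_iff_integrable_sq (hym k).aestronglyMeasurable).2 (hy2i k)
  have cs : ∀ j k, |∫ ω, x j ω * y k ω ∂P| ≤ Real.sqrt (a j) * Real.sqrt (b k) := by
    intro j k
    have h1 : |∫ ω, x j ω * y k ω ∂P| ≤ ∫ ω, ‖x j ω‖ * ‖y k ω‖ ∂P := by
      rw [← Real.norm_eq_abs]
      refine (norm_integral_le_integral_norm _).trans_eq ?_
      congr 1; funext ω; rw [norm_mul]
    have hconj : (2 : ℝ).HolderConjugate 2 := by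
      exact Real.HolderConjugate.two_two
    have h2 := integral_mul_norm_le_Lp_mul_Lq (μ := P) hconj
      (by rw [show ENNReal.ofReal (2:ℝ) = 2 by norm_num]; exact hmemx j)
      (by rw [show ENNReal.ofReal (2:ℝ) = 2 by norm_num]; exact hmemy k)
    have hx' : (∫ ω, ‖x j ω‖ ^ (2:ℝ) ∂P) = a j := by
      rw [ha]; congr 1; funext ω
      rw [show ((2:ℝ)) = ((2:ℕ):ℝ) by norm_num, Real.rpow_natCast, Real.norm_eq_abs, sq_abs]
    have hy' : (∫ ω, ‖y k ω‖ ^ (2:ℝ) ∂P) = b k := by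
      rw [hb]; congr 1; funext ω
      rw [show ((2:ℝ)) = ((2:ℕ):ℝ) by norm_num, Real.rpow_natCast, Real.norm_eq_abs, sq_abs]
    rw [hx', hy'] at h2
    refine h1.trans (h2.trans_eq ?_)
    rw [Real.sqrt_eq_rpow, Real.sqrt_eq_rpow]
  have key_le : ∀ j j' k, |(∫ ω, x j ω * y k ω ∂P) * (∫ ω, x j' ω * y k ω ∂P)|
      ≤ Real.sqrt (a j) * Real.sqrt (a j') * b k := by
    intro j j' k
    rw [abs_mul]
    calc |∫ ω, x j ω * y k ω ∂P| * |∫ ω, x j' ω * y k ω ∂P|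
        ≤ (Real.sqrt (a j) * Real.sqrt (b k)) * (Real.sqrt (a j') * Real.sqrt (b k)) :=
          mul_le_mul (cs j k) (cs j' k) (abs_nonneg _)
            (mul_nonneg (Real.sqrt_nonneg _) (Real.sqrt_nonneg _))
      _ = Real.sqrt (a j) * Real.sqrt (a j') * (Real.sqrt (b k) * Real.sqrt (b k)) := by ring
      _ = Real.sqrt (a j) * Real.sqrt (a j') * b k := by
          rw [Real.mul_self_sqrt (hbnon k)]
  have hsummable : ∀ j j', Summable (fun k : ℕ =>
      |(∫ ω, x j ω * y k ω ∂P) * (∫ ω, x j' ω * y k ω ∂P)|) := by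
    intro j j'
    exact Summable.of_nonneg_of_le (fun k => abs_nonneg _) (fun k => key_le j j' k)
      (hbsummable.mul_left _)
  refine ⟨hsummable, ?_⟩
  have hhb : ∀ j j', |∑' k, (∫ ω, x j ω * y k ω ∂P) * (∫ ω, x j' ω * y k ω ∂P)|
      ≤ Real.sqrt (a j) * Real.sqrt (a j') * Br := by
    intro j j'
    calc |∑' k, (∫ ω, x j ω * y k ω ∂P) * (∫ ω, x j' ω * y k ω ∂P)|
        ≤ ∑' k, |(∫ ω, x j ω * y k ω ∂P) * (∫ ω, x j' ω * y k ω ∂P)| := by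
          have hn := norm_tsum_le_tsum_norm
            (f := fun k => (∫ ω, x j ω * y k ω ∂P) * (∫ ω, x j' ω * y k ω ∂P))
            (by simpa only [Real.norm_eq_abs] using hsummable j j')
          simpa only [Real.norm_eq_abs] using hn
      _ ≤ ∑' k, Real.sqrt (a j) * Real.sqrt (a j') * b k :=
          Summable.tsum_le_tsum (key_le j j') (hsummable j j') (hbsummable.mul_left _)
      _ = Real.sqrt (a j) * Real.sqrt (a j') * Br := by rw [tsum_mul_left]
  have key : ∀ j j', ENNReal.ofReal ((ρ j)⁻¹ * (ρ j')⁻¹ *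
        (∑' k, (∫ ω, x j ω * y k ω ∂P) * (∫ ω, x j' ω * y k ω ∂P)) ^ 2)
      ≤ ENNReal.ofReal ((ρ j)⁻¹ * a j) *
          (ENNReal.ofReal ((ρ j')⁻¹ * a j') * ENNReal.ofReal Br ^ 2) := by
    intro j j'
    have hsq : (∑' k, (∫ ω, x j ω * y k ω ∂P) * (∫ ω, x j' ω * y k ω ∂P)) ^ 2
        ≤ a j * a j' * Br ^ 2 := by
      have h2 : (∑' k, (∫ ω, x j ω * y k ω ∂P) * (∫ ω, x j' ω * y k ω ∂P)) ^ 2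
          ≤ (Real.sqrt (a j) * Real.sqrt (a j') * Br) ^ 2 := by
        rw [← sq_abs]
        exact pow_le_pow_left₀ (abs_nonneg _) (hhb j j') 2
      refine h2.trans_eq ?_
      rw [mul_pow, mul_pow, Real.sq_sqrt (hanon j), Real.sq_sqrt (hanon j')]
    calc ENNReal.ofReal ((ρ j)⁻¹ * (ρ j')⁻¹ *
          (∑' k, (∫ ω, x j ω * y k ω ∂P) * (∫ ω, x j' ω * y k ω ∂P)) ^ 2)
        ≤ ENNReal.ofReal ((ρ j)⁻¹ * a j * ((ρ j')⁻¹ * a j' * Br ^ 2)) := by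
          apply ENNReal.ofReal_le_ofReal
          have h3 : (ρ j)⁻¹ * (ρ j')⁻¹ *
              (∑' k, (∫ ω, x j ω * y k ω ∂P) * (∫ ω, x j' ω * y k ω ∂P)) ^ 2
              ≤ (ρ j)⁻¹ * (ρ j')⁻¹ * (a j * a j' * Br ^ 2) :=
            mul_le_mul_of_nonneg_left hsq
              (mul_nonneg (inv_nonneg.2 (hρ j).le) (inv_nonneg.2 (hρ j').le))
          refine h3.trans_eq ?_
          ring
      _ = ENNReal.ofReal ((ρ j)⁻¹ * a j) *
            (ENNReal.ofReal ((ρ j')⁻¹ * a j') * ENNReal.ofReal Br ^ 2) := by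
          rw [ENNReal.ofReal_mul (mul_nonneg (inv_nonneg.2 (hρ j).le) (hanon j)),
            ENNReal.ofReal_mul (mul_nonneg (inv_nonneg.2 (hρ j').le) (hanon j')),
            ENNReal.ofReal_pow hBrnon]
  calc ∑' (j : ℕ) (j' : ℕ), ENNReal.ofReal ((ρ j)⁻¹ * (ρ j')⁻¹ *
          (∑' k : ℕ, (∫ ω, x j ω * y k ω ∂P) * (∫ ω, x j' ω * y k ω ∂P)) ^ 2)
      ≤ ∑' (j : ℕ) (j' : ℕ), ENNReal.ofReal ((ρ j)⁻¹ * a j) *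
          (ENNReal.ofReal ((ρ j')⁻¹ * a j') * ENNReal.ofReal Br ^ 2) :=
        ENNReal.tsum_le_tsum fun j => ENNReal.tsum_le_tsum fun j' => key j j'
    _ = A ^ 2 * B ^ 2 := by
        simp_rw [ENNReal.tsum_mul_left, ENNReal.tsum_mul_right, hasum, hBrB]
        ring
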